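/- Let λ ∈ V be dominant integral for R⁺ and w_u ∈ W^M, and set λ_u = w_u(λ+ρ) − ρ_M. Then P_M(λ_u) / P(λ) = ( Π_{α∈R⁺} ⟨ρ,α⟩ / Π_{α∈R⁺∩R_M} ⟨ρ_M,α⟩ ) · ( Π_{α ∈ R⁺ ∖ w_u⁻¹(R⁺∩R_M)} ⟨λ+ρ, α⟩ )⁻¹. -/

import Mathlib

open scoped RealInnerProductSpace

/-- The reflection `s_α(x) = x − (2⟨x,α⟩/⟨α,α⟩) α` in the hyperplane orthogonal
to `α`, as a map. -/
noncomputable def sRefl {V : Type} [NormedAddCommGroup V] [InnerProductSpace ℝ V]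
    (α : V) (x : V) : V :=
  x - ((2 * ⟪x, α⟫ / ⟪α, α⟫) : ℝ) • α

/-- The reflection group generated by the reflections `s_α`, `α ∈ R`, viewed inside
the group of linear automorphisms of `V` (the reflections are orthogonal maps). -/
noncomputable def reflGroup {V : Type} [NormedAddCommGroup V] [InnerProductSpace ℝ V]
    (R : Finset V) : Subgroup (V ≃ₗ[ℝ] V) :=
  Subgroup.closure {w : V ≃ₗ[ℝ] V | ∃ α ∈ R, ∀ x, w x = sRefl α x}

/-- The set of positive roots determined by a regular element `H`. -/
noncomputable def posRoots {V : Type} [NormedAddCommGroup V] [InnerProductSpace ℝ V]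
    (R : Finset V) (H : V) : Finset V :=
  R.filter (fun α => 0 < ⟪α, H⟫)

open Classical in
/-- The positive roots of the subsystem `R_M`, namely `R⁺ ∩ R_M`. -/
noncomputable def posRootsM {V : Type} [NormedAddCommGroup V] [InnerProductSpace ℝ V]
    (R RM : Finset V) (H : V) : Finset V :=
  (posRoots R H).filter (fun α => α ∈ RM)

/-- `W^M = {w ∈ W : w⁻¹β ∈ R⁺ for every β ∈ R⁺ ∩ R_M}`. -/
noncomputable def WupperM {V : Type} [NormedAddCommGroup V] [InnerProductSpace ℝ V]
    (R RM : Finset V) (H : V) : Set (V ≃ₗ[ℝ] V) :=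
  {w | w ∈ reflGroup R ∧
    ∀ β ∈ RM, β ∈ posRoots R H → w⁻¹ β ∈ posRoots R H}

/-- The half sum `ρ` of the positive roots. -/
noncomputable def halfSum {V : Type} [NormedAddCommGroup V] [InnerProductSpace ℝ V]
    (P : Finset V) : V :=
  (1 / 2 : ℝ) • ∑ α ∈ P, α

/-- The Weyl polynomial `P(μ) = Π_{α ∈ P} ⟨μ+ρ,α⟩ / ⟨ρ,α⟩` attached to a set `P` of
positive roots with half sum `ρ = halfSum P`. -/
noncomputable def weylPoly {V : Type} [NormedAddCommGroup V] [InnerProductSpace ℝ V]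
    (P : Finset V) (μ : V) : ℝ :=
  ∏ α ∈ P, (⟪μ + halfSum P, α⟫ / ⟪halfSum P, α⟫)

/-- The reflection `sRefl α` preserves the inner product. -/
lemma inner_sRefl_sRefl {V : Type} [NormedAddCommGroup V] [InnerProductSpace ℝ V]
    (α x y : V) : ⟪sRefl α x, sRefl α y⟫ = ⟪x, y⟫ := by
  rcases eq_or_ne α 0 with h | h
  · simp [sRefl, h]
  · have hs : ⟪α, α⟫ ≠ (0:ℝ) := inner_self_ne_zero.mpr h
    simp only [sRefl, inner_sub_left, inner_sub_right, real_inner_smul_left,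
      real_inner_smul_right]
    rw [real_inner_comm α y]
    field_simp
    ring

/-- The reflection `sRefl α` is an involution. -/
lemma sRefl_sRefl {V : Type} [NormedAddCommGroup V] [InnerProductSpace ℝ V]
    (α x : V) : sRefl α (sRefl α x) = x := by
  rcases eq_or_ne α 0 with h | h
  · simp [sRefl, h]
  · have hs : ⟪α, α⟫ ≠ (0:ℝ) := inner_self_ne_zero.mpr h
    simp only [sRefl, inner_sub_left, real_inner_smul_left]
    match_scalars
    · ring
    · field_simp
      ring

/-- Every element of the reflection group preserves the inner product. -/
lemma reflGroup_inner {V : Type} [NormedAddCommGroup V] [InnerProductSpace ℝ V]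
    (R : Finset V) {w : V ≃ₗ[ℝ] V} (hw : w ∈ reflGroup R) (x y : V) :
    ⟪w x, w y⟫ = ⟪x, y⟫ := by
  revert x y
  refine Subgroup.closure_induction
    (p := fun w _ => ∀ x y : V, ⟪w x, w y⟫ = ⟪x, y⟫) ?_ ?_ ?_ ?_ hw
  · rintro g ⟨α, _, hg⟩ x y
    rw [hg x, hg y]
    exact inner_sRefl_sRefl α x y
  · intro x y; rfl
  · intro a b _ _ pa pb x y
    have h1 : (a * b) x = a (b x) := rfl
    have h2 : (a * b) y = a (b y) := rfl
    rw [h1, h2, pa (b x) (b y), pb x y]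
  · intro a _ pa x y
    have h := pa (a⁻¹ x) (a⁻¹ y)
    have e : ∀ z : V, a (a⁻¹ z) = z := fun z => a.apply_symm_apply z
    rw [e, e] at h
    exact h.symm

lemma inner_self_pos' {V : Type} [NormedAddCommGroup V] [InnerProductSpace ℝ V]
    {x : V} (hx : x ≠ 0) : (0:ℝ) < ⟪x, x⟫ :=
  lt_of_le_of_ne real_inner_self_nonneg (Ne.symm (inner_self_ne_zero.mpr hx))

/-- `⟨ρ, α⟩ > 0` for every positive root `α`. -/
lemma rho_pos {V : Type} [NormedAddCommGroup V] [InnerProductSpace ℝ V]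
    (R : Finset V) (hR0 : (0 : V) ∉ R)
    (hRrefl : ∀ α ∈ R, ∀ β ∈ R, sRefl α β ∈ R)
    (H : V) (hH : ∀ α ∈ R, ⟪α, H⟫ ≠ 0)
    {α : V} (hα : α ∈ posRoots R H) : 0 < ⟪halfSum (posRoots R H), α⟫ := by
  classical
  obtain ⟨hαR, hαH⟩ := Finset.mem_filter.mp hα
  have hα0 : α ≠ 0 := fun h => hR0 (h ▸ hαR)
  have hs : (0:ℝ) < ⟪α, α⟫ := inner_self_pos' hα0
  rw [halfSum, real_inner_smul_left, sum_inner]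
  have hsplit := Finset.sum_filter_add_sum_filter_not (posRoots R H)
    (fun β => sRefl α β ∈ posRoots R H) (fun β => ⟪β, α⟫)
  have hzero : ∑ β ∈ (posRoots R H).filter (fun β => sRefl α β ∈ posRoots R H),
      ⟪β, α⟫ = 0 := by
    refine Finset.sum_involution (fun β _ => sRefl α β) ?_ ?_ ?_ ?_
    · intro β _
      simp only [sRefl, inner_sub_left, real_inner_smul_left]
      field_simp
      ring
    · intro β _ hne heq
      apply hne
      have h0 : ((2 * ⟪β, α⟫ / ⟪α, α⟫ : ℝ)) • α = 0 := sub_eq_self.mp heq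
      rcases smul_eq_zero.mp h0 with hc | h0'
      · field_simp at hc
        linarith
      · exact absurd h0' hα0
    · intro β hβ
      obtain ⟨hβP, hβr⟩ := Finset.mem_filter.mp hβ
      refine Finset.mem_filter.mpr ⟨hβr, ?_⟩
      rw [sRefl_sRefl]
      exact hβP
    · intro β _
      exact sRefl_sRefl α β
  have hpos : 0 < ∑ β ∈ (posRoots R H).filter (fun β => ¬ (sRefl α β ∈ posRoots R H)),
      ⟪β, α⟫ := by
    apply Finset.sum_pos'
    · intro β hβ
      obtain ⟨hβP, hβno⟩ := Finset.mem_filter.mp hβ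
      obtain ⟨hβR, hβH⟩ := Finset.mem_filter.mp hβP
      have hsβ : sRefl α β ∈ R := hRrefl α hαR β hβR
      have h1 : ⟪sRefl α β, H⟫ < 0 :=
        lt_of_le_of_ne
          (le_of_not_gt (fun hpos' => hβno (Finset.mem_filter.mpr ⟨hsβ, hpos'⟩)))
          (hH _ hsβ)
      have h2 : ⟪β, H⟫ - (2 * ⟪β, α⟫ / ⟪α, α⟫) * ⟪α, H⟫ < 0 := by
        simpa [sRefl, inner_sub_left, real_inner_smul_left] using h1
      have hc : 0 < 2 * ⟪β, α⟫ / ⟪α, α⟫ := by nlinarith [h2, hβH, hαH]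
      rcases div_pos_iff.mp hc with ⟨h5, _⟩ | ⟨_, h6⟩
      · linarith
      · linarith
    · refine ⟨α, ?_, hs⟩
      refine Finset.mem_filter.mpr ⟨hα, ?_⟩
      have hrα : sRefl α α = -α := by
        have h2s : (2 * ⟪α, α⟫ / ⟪α, α⟫ : ℝ) = 2 := by field_simp
        rw [sRefl, h2s, two_smul]
        abel
      rw [hrα]
      intro hmem
      have := (Finset.mem_filter.mp hmem).2
      rw [inner_neg_left] at this
      linarith
  linarith

open Classical in
/-- With `λ` dominant integral and `w_u ∈ W^M`, setting
`λ_u = w_u(λ+ρ) − ρ_M`, the ratio of Weyl polynomials is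
`P_M(λ_u)/P(λ) = (Π_{α∈R⁺} ⟨ρ,α⟩ / Π_{α∈R⁺∩R_M} ⟨ρ_M,α⟩) · (Π_{α∈R⁺∖w_u⁻¹(R⁺∩R_M)} ⟨λ+ρ,α⟩)⁻¹`. -/
theorem weylPoly_ratio
    {V : Type} [NormedAddCommGroup V] [InnerProductSpace ℝ V] [FiniteDimensional ℝ V]
    (R : Finset V) (hR0 : (0 : V) ∉ R)
    (hRrefl : ∀ α ∈ R, ∀ β ∈ R, sRefl α β ∈ R)
    (hRred : ∀ α ∈ R, ∀ c : ℝ, c • α ∈ R → c = 1 ∨ c = -1)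
    (hcrys : ∀ α ∈ R, ∀ β ∈ R, ∃ k : ℤ, 2 * ⟪α, β⟫ / ⟪β, β⟫ = (k : ℝ))
    (H : V) (hH : ∀ α ∈ R, ⟪α, H⟫ ≠ 0)
    (RM : Finset V) (hRM : RM ⊆ R)
    (hclosed : ∀ α ∈ RM, ∀ β ∈ RM, sRefl α β ∈ RM)
    (lam : V)
    (hdom : ∀ α ∈ posRoots R H, ∃ k : ℕ, 2 * ⟪lam, α⟫ / ⟪α, α⟫ = (k : ℝ))
    (wu : V ≃ₗ[ℝ] V) (hwu : wu ∈ WupperM R RM H) :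
    weylPoly (posRootsM R RM H)
        (wu (lam + halfSum (posRoots R H)) - halfSum (posRootsM R RM H))
      / weylPoly (posRoots R H) lam =
    ((∏ α ∈ posRoots R H, ⟪halfSum (posRoots R H), α⟫) /
        (∏ α ∈ posRootsM R RM H, ⟪halfSum (posRootsM R RM H), α⟫)) *
      (∏ α ∈ posRoots R H \ ((posRootsM R RM H).image fun β => wu⁻¹ β),
        ⟪lam + halfSum (posRoots R H), α⟫)⁻¹ := by
  classical
  set P : Finset V := posRoots R H with hP
  set M : Finset V := posRootsM R RM H with hM
  set S : Finset V := M.image (fun β => wu⁻¹ β) with hSdef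
  set Λ : V := lam + halfSum P with hΛdef
  -- M as positive roots of the subsystem RM
  have hMeq : M = posRoots RM H := by
    ext β
    simp only [hM, posRootsM, posRoots, Finset.mem_filter]
    constructor
    · rintro ⟨⟨_, h2⟩, h3⟩; exact ⟨h3, h2⟩
    · rintro ⟨h1, h2⟩; exact ⟨⟨hRM h1, h2⟩, h1⟩
  have hRM0 : (0 : V) ∉ RM := fun h => hR0 (hRM h)
  have hHM : ∀ β ∈ RM, ⟪β, H⟫ ≠ 0 := fun β hβ => hH β (hRM hβ)
  -- positivity of the rho-pairings
  have hρ : ∀ α ∈ P, (0:ℝ) < ⟪halfSum P, α⟫ := fun α hα =>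
    rho_pos R hR0 hRrefl H hH hα
  have hρM : ∀ β ∈ M, (0:ℝ) < ⟪halfSum M, β⟫ := by
    rw [hMeq]
    intro β hβ
    exact rho_pos RM hRM0 hclosed H hHM hβ
  -- wu is orthogonal
  have hinner : ∀ x y : V, ⟪wu x, wu y⟫ = ⟪x, y⟫ :=
    fun x y => reflGroup_inner R hwu.1 x y
  have hback : ∀ z : V, wu (wu⁻¹ z) = z := fun z => wu.apply_symm_apply z
  -- S ⊆ P
  have hSP : S ⊆ P := by
    intro a ha
    obtain ⟨β, hβ, rfl⟩ := Finset.mem_image.mp ha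
    obtain ⟨hβP, hβRM⟩ := Finset.mem_filter.mp hβ
    exact hwu.2 β hβRM hβP
  -- positivity of ⟪Λ, α⟫ for α ∈ P
  have hΛ : ∀ α ∈ P, (0:ℝ) < ⟪Λ, α⟫ := by
    intro α hα
    obtain ⟨hαR, _⟩ := Finset.mem_filter.mp hα
    have hα0 : α ≠ 0 := fun h => hR0 (h ▸ hαR)
    have hs : (0:ℝ) < ⟪α, α⟫ := inner_self_pos' hα0
    obtain ⟨k, hk⟩ := hdom α hα
    have hl : (0:ℝ) ≤ ⟪lam, α⟫ := by
      have h1 : ⟪lam, α⟫ = (k : ℝ) * ⟪α, α⟫ / 2 := by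
        field_simp at hk
        linarith
      rw [h1]
      positivity
    have := hρ α hα
    rw [hΛdef, inner_add_left]
    linarith
  -- numerator
  have hnum : weylPoly M (wu Λ - halfSum M)
      = (∏ α ∈ S, ⟪Λ, α⟫) / (∏ β ∈ M, ⟪halfSum M, β⟫) := by
    rw [weylPoly, Finset.prod_div_distrib]
    congr 1
    rw [hSdef, Finset.prod_image (fun x _ y _ h => wu⁻¹.injective h)]
    refine Finset.prod_congr rfl (fun β _ => ?_)
    rw [sub_add_cancel, ← hback β, hinner, hback]
  -- denominator
  have hden : weylPoly P lam
      = (∏ α ∈ P, ⟪Λ, α⟫) / (∏ α ∈ P, ⟪halfSum P, α⟫) := by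
    rw [weylPoly, Finset.prod_div_distrib, hΛdef]
  have hsdiff : (∏ α ∈ P \ S, ⟪Λ, α⟫) * (∏ α ∈ S, ⟪Λ, α⟫) = ∏ α ∈ P, ⟪Λ, α⟫ :=
    Finset.prod_sdiff hSP
  -- nonvanishing
  have hA : (∏ α ∈ S, ⟪Λ, α⟫) ≠ 0 :=
    ne_of_gt (Finset.prod_pos (fun α hα => hΛ α (hSP hα)))
  have hB : (∏ α ∈ P \ S, ⟪Λ, α⟫) ≠ 0 :=
    ne_of_gt (Finset.prod_pos (fun α hα => hΛ α (Finset.mem_sdiff.mp hα).1))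
  have hC : (∏ α ∈ P, ⟪halfSum P, α⟫) ≠ 0 :=
    ne_of_gt (Finset.prod_pos hρ)
  have hD : (∏ β ∈ M, ⟪halfSum M, β⟫) ≠ 0 :=
    ne_of_gt (Finset.prod_pos hρM)
  rw [hnum, hden, ← hsdiff]
  field_simp
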